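/- For real numbers β and γ, the double integral of e^{2i(βr + γz)} over the triangle {-1/2 ≤ r ≤ z ≤ 1/2} equals (1/2) sinc(β) sinc(γ) + i (β-γ)(sinc(β+γ) - sinc(β-γ))/(4βγ), where the formula at β = 0 or γ = 0 is interpreted by continuous extension; in particular the value at β = γ = 0 is 1/2. -/

import Mathlib

noncomputable def sinc (z : ℝ) : ℝ := if z = 0 then 1 else Real.sin z / z

open Complex intervalIntegral in
private lemma tri_inner_eval (γ : ℝ) (hγ : γ ≠ 0) (r : ℝ) :
    ∫ z in r..(1/2:ℝ), Complex.exp (2 * Complex.I * (γ * z)) =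
      (Complex.exp (Complex.I * γ) - Complex.exp (2 * Complex.I * γ * r)) / (2 * Complex.I * γ) := by
  have h : (2 * Complex.I * (γ:ℂ)) ≠ 0 := by simp [Complex.I_ne_zero, hγ]
  simp_rw [show ∀ z : ℝ, 2 * Complex.I * ((γ:ℂ) * z) = (2 * Complex.I * γ) * z from fun z => by ring]
  rw [integral_exp_mul_complex h]
  congr 2
  congr 1; push_cast; ring

private lemma tri_realalg (β γ sb cb sg cg : ℝ) (hβ : β ≠ 0) (hγ : γ ≠ 0) (hp : β+γ ≠ 0)
    (hm : β-γ ≠ 0) :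
    -((cg*sb/β - (sb*cg+cb*sg)/(β+γ))/(2*γ))
      = (β-γ)*((sb*cg+cb*sg)/(β+γ) - (sb*cg-cb*sg)/(β-γ))/(4*β*γ) := by
  field_simp
  ring

open Complex in
private lemma tri_alg (β γ sb cb sg cg : ℝ) (hβ : β ≠ 0) (hγ : γ ≠ 0) (hp : β+γ ≠ 0)
    (hm : β-γ ≠ 0) :
    (((cg:ℂ) + sg*Complex.I) * ((sb:ℂ)/β) - ((sb*cg+cb*sg)/(β+γ) : ℝ))/(2*Complex.I*γ)
    = 1/2*((sb:ℂ)/β)*((sg:ℂ)/γ)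
      + Complex.I*((β:ℂ)-γ)*( (((sb*cg+cb*sg)/(β+γ) : ℝ) : ℂ) - (((sb*cg-cb*sg)/(β-γ) : ℝ):ℂ) )/(4*(β:ℂ)*γ) := by
  have hβ' : (β:ℂ) ≠ 0 := Complex.ofReal_ne_zero.2 hβ
  have hγ' : (γ:ℂ) ≠ 0 := Complex.ofReal_ne_zero.2 hγ
  have hp' : (β:ℂ)+γ ≠ 0 := by exact_mod_cast Complex.ofReal_ne_zero.2 hp
  have hm' : (β:ℂ)-γ ≠ 0 := by exact_mod_cast Complex.ofReal_ne_zero.2 hm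
  have h2Iγ : (2*Complex.I*(γ:ℂ)) ≠ 0 := by simp [Complex.I_ne_zero, hγ]
  have h1 : (((cg:ℂ) + sg*Complex.I) * ((sb:ℂ)/β) - ((sb*cg+cb*sg)/(β+γ) : ℝ))
      = ((((sb*sg/(2*β*γ) : ℝ)):ℂ)
          - (((cg*sb/β - (sb*cg+cb*sg)/(β+γ))/(2*γ) : ℝ):ℂ)*Complex.I) * (2*Complex.I*γ) := by
    push_cast
    field_simp
    ring_nf
    simp only [Complex.I_sq]
    ring
  have h2 : -(((cg*sb/β - (sb*cg+cb*sg)/(β+γ))/(2*γ) : ℝ):ℂ)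
      = ((β:ℂ)-γ)*( (((sb*cg+cb*sg)/(β+γ) : ℝ) : ℂ) - (((sb*cg-cb*sg)/(β-γ) : ℝ):ℂ) )/(4*(β:ℂ)*γ) := by
    exact_mod_cast congrArg (Complex.ofReal) (tri_realalg β γ sb cb sg cg hβ hγ hp hm)
  rw [div_eq_iff h2Iγ, h1]
  push_cast at h2 ⊢
  linear_combination (2*Complex.I*(γ:ℂ)) * Complex.I * h2

open Complex in
private lemma tri_exp_half (x : ℝ) :
    Complex.exp (2 * Complex.I * (x:ℂ) * ((1/2:ℝ):ℂ)) =
      ((Real.cos x : ℝ):ℂ) + ((Real.sin x : ℝ):ℂ) * Complex.I := by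
  rw [show 2 * Complex.I * (x:ℂ) * ((1/2:ℝ):ℂ) = (x:ℂ) * Complex.I by push_cast; ring,
    Complex.exp_mul_I, ← Complex.ofReal_cos, ← Complex.ofReal_sin]

open Complex in
private lemma tri_exp_neg_half (x : ℝ) :
    Complex.exp (2 * Complex.I * (x:ℂ) * ((-(1/2):ℝ):ℂ)) =
      ((Real.cos x : ℝ):ℂ) - ((Real.sin x : ℝ):ℂ) * Complex.I := by
  rw [show 2 * Complex.I * (x:ℂ) * ((-(1/2):ℝ):ℂ) = ((-x : ℝ):ℂ) * Complex.I by push_cast; ring,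
    Complex.exp_mul_I, ← Complex.ofReal_cos, ← Complex.ofReal_sin, Real.cos_neg, Real.sin_neg]
  push_cast; ring

private lemma tri_red (s c x : ℝ) :
    ((((c:ℝ):ℂ) + ((s:ℝ):ℂ)*Complex.I) - (((c:ℝ):ℂ) - ((s:ℝ):ℂ)*Complex.I))/(2*Complex.I*(x:ℂ))
      = ((s:ℝ):ℂ)/((x:ℝ):ℂ) := by
  rcases eq_or_ne (x:ℂ) 0 with h|h
  · simp [h]
  · rw [show ((((c:ℝ):ℂ) + ((s:ℝ):ℂ)*Complex.I) - (((c:ℝ):ℂ) - ((s:ℝ):ℂ)*Complex.I)) = (2*Complex.I)*((s:ℝ):ℂ) by ring,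
      show (2*Complex.I*(x:ℂ)) = (2*Complex.I)*(x:ℂ) by ring,
      mul_div_mul_left _ _ (by simp [Complex.I_ne_zero] : (2*Complex.I : ℂ) ≠ 0)]

private lemma sinc_ne (x : ℝ) (hx : x ≠ 0) : ((sinc x : ℝ):ℂ) = ((Real.sin x : ℝ):ℂ)/(x:ℂ) := by
  rw [sinc, if_neg hx]; push_cast; ring

private lemma tri_div2I (z x : ℂ) : z/(2*Complex.I*x) = -(Complex.I*z)/(2*x) := by
  rcases eq_or_ne x 0 with h|h
  · simp [h]
  · rw [div_eq_div_iff (by simp [Complex.I_ne_zero, h]) (by simpa using h)]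
    linear_combination (2*z*x)*Complex.I_sq

private lemma tri_I3 : Complex.I^3 = -Complex.I := by
  rw [pow_succ, Complex.I_sq]; ring

private lemma tri_I4 : Complex.I^4 = 1 := by
  rw [pow_succ, tri_I3]; simp [Complex.I_mul_I]

private lemma sinc_neg (x : ℝ) : sinc (-x) = sinc x := by
  by_cases h : x = 0
  · simp [h]
  · rw [sinc, sinc, if_neg h, if_neg (by simpa using h), Real.sin_neg]
    field_simp

open Complex intervalIntegral in
private lemma tri_formula (β γ : ℝ) (hβ : β ≠ 0) (hγ : γ ≠ 0) :
    (∫ r in (-(1/2) : ℝ)..(1/2 : ℝ),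
        Complex.exp (2 * Complex.I * (β * r)) *
          ∫ z in r..(1/2 : ℝ), Complex.exp (2 * Complex.I * (γ * z))) =
      (1/2 : ℂ) * (sinc β : ℂ) * (sinc γ : ℂ) +
        Complex.I * ((β - γ : ℝ) : ℂ) * ((sinc (β + γ) : ℂ) - (sinc (β - γ) : ℂ)) /
          (4 * (β : ℂ) * (γ : ℂ)) := by
  have hγ' : (2 * Complex.I * (γ:ℂ)) ≠ 0 := by simp [Complex.I_ne_zero, hγ]
  have hβ' : (2 * Complex.I * (β:ℂ)) ≠ 0 := by simp [Complex.I_ne_zero, hβ]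
  simp_rw [tri_inner_eval γ hγ]
  have key : ∀ r : ℝ, Complex.exp (2 * Complex.I * ((β:ℂ) * r)) *
      ((Complex.exp (Complex.I * γ) - Complex.exp (2 * Complex.I * γ * r)) / (2 * Complex.I * γ))
      = (Complex.exp (Complex.I * γ) / (2 * Complex.I * γ)) * Complex.exp ((2 * Complex.I * β) * r)
        - (1/(2 * Complex.I * γ)) * Complex.exp ((2 * Complex.I * β + 2 * Complex.I * γ) * r) := by
    intro r
    rw [show ((2 * Complex.I * β + 2 * Complex.I * γ) * r : ℂ) = 2*Complex.I*β*r + 2*Complex.I*γ*r by ring,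
      Complex.exp_add]
    field_simp
  simp_rw [key]
  rw [intervalIntegral.integral_sub ((by fun_prop : Continuous fun r : ℝ => Complex.exp (Complex.I * γ) / (2 * Complex.I * γ) * Complex.exp ((2 * Complex.I * β) * r)).intervalIntegrable _ _)
      ((by fun_prop : Continuous fun r : ℝ => (1/(2 * Complex.I * γ)) * Complex.exp ((2 * Complex.I * β + 2 * Complex.I * γ) * r)).intervalIntegrable _ _),
    intervalIntegral.integral_const_mul, intervalIntegral.integral_const_mul,
    integral_exp_mul_complex hβ']
  have hexpIγ : Complex.exp (Complex.I * γ) = ((Real.cos γ : ℝ):ℂ) + ((Real.sin γ : ℝ):ℂ) * Complex.I := by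
    rw [show Complex.I * (γ:ℂ) = (γ:ℂ) * Complex.I by ring, Complex.exp_mul_I,
      ← Complex.ofReal_cos, ← Complex.ofReal_sin]
  by_cases hbg : β + γ = 0
  · have h0 : (2 * Complex.I * (β:ℂ) + 2 * Complex.I * (γ:ℂ)) = 0 := by
      have : ((β:ℂ) + γ) = 0 := by exact_mod_cast congrArg (Complex.ofReal) hbg
      linear_combination 2*Complex.I*this
    simp only [h0, zero_mul, Complex.exp_zero, intervalIntegral.integral_const]
    have hγβ : γ = -β := by linarith
    subst hγβ
    rw [tri_exp_half β, tri_exp_neg_half β, hexpIγ]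
    rw [show β + -β = 0 by ring, show β - -β = 2*β by ring]
    rw [sinc_neg, sinc_ne β hβ, sinc_ne (2*β) (by simpa using hβ), Real.sin_two_mul,
      show sinc 0 = 1 from if_pos rfl, Real.cos_neg, Real.sin_neg]
    have hβc : (β:ℂ) ≠ 0 := Complex.ofReal_ne_zero.2 hβ
    simp only [tri_div2I]
    push_cast
    field_simp
    ring_nf
    simp only [Complex.I_sq, tri_I3, tri_I4]
    field_simp
    simp; ring
  · have hbg' : (2 * Complex.I * (β:ℂ) + 2 * Complex.I * (γ:ℂ)) ≠ 0 := by
      intro h; apply hbg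
      have : ((β:ℂ) + γ) = 0 := by
        apply mul_left_cancel₀ (show (2*Complex.I:ℂ) ≠ 0 by simp [Complex.I_ne_zero])
        rw [mul_zero]; linear_combination h
      exact_mod_cast congrArg Complex.re this
    rw [integral_exp_mul_complex hbg']
    rw [show (2 * Complex.I * (β:ℂ) + 2 * Complex.I * (γ:ℂ)) = 2 * Complex.I * ((β+γ:ℝ):ℂ) by push_cast; ring]
    rw [tri_exp_half β, tri_exp_neg_half β, tri_exp_half (β+γ), tri_exp_neg_half (β+γ), hexpIγ]
    rw [tri_red (Real.sin β) (Real.cos β) β, tri_red (Real.sin (β+γ)) (Real.cos (β+γ)) (β+γ)]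
    by_cases hbm : β - γ = 0
    · have hγβ : γ = β := by linarith
      subst hγβ
      rw [show γ - γ = 0 by ring, show sinc 0 = 1 from if_pos rfl]
      rw [sinc_ne γ hγ, sinc_ne (γ+γ) (by simpa using hbg)]
      have hγc : (γ:ℂ) ≠ 0 := Complex.ofReal_ne_zero.2 hγ
      rw [show Real.sin (γ+γ) = 2*Real.sin γ*Real.cos γ by rw [← Real.sin_two_mul]; ring_nf]
      simp only [tri_div2I]
      push_cast
      field_simp
      ring_nf
      simp only [Complex.I_sq, tri_I3, tri_I4]
      field_simp
    · rw [sinc_ne β hβ, sinc_ne γ hγ, sinc_ne (β+γ) hbg, sinc_ne (β-γ) hbm,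
        Real.sin_add, Real.sin_sub]
      have := tri_alg β γ (Real.sin β) (Real.cos β) (Real.sin γ) (Real.cos γ) hβ hγ hbg hbm
      push_cast at this ⊢
      linear_combination this

open Complex intervalIntegral MeasureTheory in
private lemma tri_cont :
    Continuous (fun p : ℝ × ℝ =>
      ∫ r in (-(1/2) : ℝ)..(1/2 : ℝ),
        Complex.exp (2 * Complex.I * (p.1 * r)) *
          ∫ z in r..(1/2 : ℝ), Complex.exp (2 * Complex.I * (p.2 * z))) := by
  have hinner : Continuous (fun q : (ℝ × ℝ) × ℝ =>
      ∫ z in q.2..(1/2:ℝ), Complex.exp (2 * Complex.I * (q.1.2 * z))) := by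
    have h : ∀ q : (ℝ × ℝ) × ℝ,
        (∫ z in q.2..(1/2:ℝ), Complex.exp (2 * Complex.I * (q.1.2 * z)))
        = -∫ z in (1/2:ℝ)..q.2, Complex.exp (2 * Complex.I * (q.1.2 * z)) := fun q =>
      (intervalIntegral.integral_symm _ _)
    simp_rw [h]
    apply Continuous.neg
    apply intervalIntegral.continuous_parametric_intervalIntegral_of_continuous
      (f := fun (q : (ℝ × ℝ) × ℝ) (z : ℝ) => Complex.exp (2 * Complex.I * (q.1.2 * z)))
      (s := fun q => q.2)
    · apply Complex.continuous_exp.comp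
      fun_prop
    · exact continuous_snd
  apply intervalIntegral.continuous_parametric_intervalIntegral_of_continuous'
    (f := fun (p : ℝ × ℝ) (r : ℝ) =>
      Complex.exp (2 * Complex.I * (p.1 * r)) *
        ∫ z in r..(1/2:ℝ), Complex.exp (2 * Complex.I * (p.2 * z)))
  apply Continuous.mul
  · apply Complex.continuous_exp.comp
    fun_prop
  · exact hinner

open Complex intervalIntegral in
private lemma tri_zero :
    (∫ r in (-(1/2) : ℝ)..(1/2 : ℝ),
        Complex.exp (2 * Complex.I * ((0:ℝ) * r)) *
          ∫ z in r..(1/2 : ℝ), Complex.exp (2 * Complex.I * ((0:ℝ) * z))) = 1/2 := by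
  have h : ∀ r : ℝ, (Complex.exp (2 * Complex.I * (((0:ℝ):ℂ) * r)) *
      ∫ z in r..(1/2 : ℝ), Complex.exp (2 * Complex.I * (((0:ℝ):ℂ) * z)))
      = ((1/2 - r : ℝ) : ℂ) := by
    intro r
    simp only [Complex.ofReal_zero, zero_mul, mul_zero, Complex.exp_zero,
      intervalIntegral.integral_const, one_mul, smul_eq_mul, mul_one]
    rw [Complex.real_smul, mul_one]
  simp_rw [h]
  rw [intervalIntegral.integral_ofReal]
  rw [intervalIntegral.integral_sub intervalIntegrable_const (Continuous.intervalIntegrable (by fun_prop) _ _),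
    intervalIntegral.integral_const, integral_id]
  norm_num

/-- The double integral of `e^{2i(βr+γz)}` over the triangle `{-1/2 ≤ r ≤ z ≤ 1/2}`
equals the continuous extension of
`(1/2)·sinc β·sinc γ + i·(β-γ)(sinc(β+γ)-sinc(β-γ))/(4βγ)`, whose value at `β = γ = 0`
is `1/2`. -/
theorem triangle_integral_sinc :
    ∃ F : ℝ → ℝ → ℂ,
      Continuous (fun p : ℝ × ℝ => F p.1 p.2) ∧
      (∀ β γ : ℝ, β ≠ 0 → γ ≠ 0 →
        F β γ = (1/2 : ℂ) * (sinc β : ℂ) * (sinc γ : ℂ) +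
          Complex.I * ((β - γ : ℝ) : ℂ) * ((sinc (β + γ) : ℂ) - (sinc (β - γ) : ℂ)) /
            (4 * (β : ℂ) * (γ : ℂ))) ∧
      (∀ β γ : ℝ,
        (∫ r in (-(1/2) : ℝ)..(1/2 : ℝ),
            Complex.exp (2 * Complex.I * (β * r)) *
              ∫ z in r..(1/2 : ℝ), Complex.exp (2 * Complex.I * (γ * z))) = F β γ) ∧
      F 0 0 = 1/2 := by
  refine ⟨fun β γ =>
    ∫ r in (-(1/2) : ℝ)..(1/2 : ℝ),
      Complex.exp (2 * Complex.I * (β * r)) *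
        ∫ z in r..(1/2 : ℝ), Complex.exp (2 * Complex.I * (γ * z)),
    tri_cont, fun β γ hβ hγ => tri_formula β γ hβ hγ, fun β γ => rfl, tri_zero⟩
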